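/- arXiv:0809.2508 — 4 statements merged into one kernel-verified Lean document; each statement's English description precedes it below -/
import Mathlib

section
/- If A is an n×m real matrix all of whose n×n submatrices are invertible (Unique Representation Property, URP), and s ∈ null(A) has at least m−n elements with absolute value less than α, then ‖s‖ ≤ (M+1)·m·α, where M = max{‖B⁻¹‖ : B a submatrix of A with at most n linearly independent columns and B⁻¹ a left inverse of B} and the columns of A are normalized to unit norm. -/
open Matrix Finset Filter

noncomputable def vnorm {k : ℕ} (s : Fin k → ℝ) : ℝ := Real.sqrt (∑ i, (s i)^2)

noncomputable def mnorm {p q : ℕ} (L : Matrix (Fin p) (Fin q) ℝ) : ℝ :=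
  Real.sqrt (∑ i, ∑ j, (L i j)^2)

def URP {n m : ℕ} (A : Matrix (Fin n) (Fin m) ℝ) : Prop :=
  ∀ g : Fin n → Fin m, Function.Injective g → (A.submatrix id g).det ≠ 0

def UnitCols {n m : ℕ} (A : Matrix (Fin n) (Fin m) ℝ) : Prop :=
  ∀ j, vnorm (fun i => A i j) = 1

def LeftInvBound {n m : ℕ} (A : Matrix (Fin n) (Fin m) ℝ) (M : ℝ) : Prop :=
  ∀ (k : ℕ), k ≤ n → ∀ g : Fin k → Fin m, Function.Injective g →
    ∃ L : Matrix (Fin k) (Fin n) ℝ, L * A.submatrix id g = 1 ∧ mnorm L ≤ M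

lemma vnorm_eq_norm {k : ℕ} (x : Fin k → ℝ) :
    vnorm x = ‖(WithLp.equiv 2 (Fin k → ℝ)).symm x‖ := by
  simp [vnorm, EuclideanSpace.norm_eq, Real.norm_eq_abs, sq_abs]

lemma colbound {p q : ℕ} (L : Matrix (Fin p) (Fin q) ℝ) (c : Fin q → ℝ)
    (hc : ∑ j, (c j)^2 = 1) :
    vnorm (L.mulVec c) ≤ mnorm L := by
  unfold vnorm mnorm
  apply Real.sqrt_le_sqrt
  calc ∑ i, (L.mulVec c i)^2 ≤ ∑ i, (∑ j, (L i j)^2) * (∑ j, (c j)^2) := by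
        apply Finset.sum_le_sum
        intro i _
        exact Finset.sum_mul_sq_le_sq_mul_sq Finset.univ (L i) c
    _ = ∑ i, ∑ j, (L i j)^2 := by simp [hc]

lemma sqrt_add_le (a b : ℝ) (ha : 0 ≤ a) (hb : 0 ≤ b) :
    Real.sqrt (a + b) ≤ Real.sqrt a + Real.sqrt b := by
  have h1 := Real.sq_sqrt ha
  have h2 := Real.sq_sqrt hb
  have h3 := Real.sqrt_nonneg a
  have h4 := Real.sqrt_nonneg b
  have : a + b ≤ (Real.sqrt a + Real.sqrt b)^2 := by nlinarith
  calc Real.sqrt (a + b) ≤ Real.sqrt ((Real.sqrt a + Real.sqrt b)^2) := Real.sqrt_le_sqrt this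
    _ = Real.sqrt a + Real.sqrt b := Real.sqrt_sq (by positivity)

theorem stmt0 {n m : ℕ} (hnm : n < m) (A : Matrix (Fin n) (Fin m) ℝ)
    (hcols : UnitCols A) (hURP : URP A) (M : ℝ) (hM : LeftInvBound A M)
    (s : Fin m → ℝ) (hs : A.mulVec s = 0) (α : ℝ)
    (hα : (m - n : ℕ) ≤ (Finset.univ.filter fun i => |s i| < α).card) :
    vnorm s ≤ (M + 1) * m * α := by
  classical
  set T : Finset (Fin m) := Finset.univ.filter (fun i => |s i| < α) with hTdef
  set S : Finset (Fin m) := Tᶜ with hSdef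
  have hcardm : T.card + S.card = m := by
    have h := Finset.card_add_card_compl T
    simpa [hSdef] using h
  have hScard : S.card ≤ n := by omega
  -- α > 0
  have hTne : T.Nonempty := by
    rw [← Finset.card_pos]; omega
  have hαpos : 0 < α := by
    obtain ⟨j, hj⟩ := hTne
    rw [hTdef, Finset.mem_filter] at hj
    exact lt_of_le_of_lt (abs_nonneg _) hj.2
  set k := S.card with hk
  set g : Fin k → Fin m := fun i => S.orderEmbOfFin rfl i with hg
  have hginj : Function.Injective g := (S.orderEmbOfFin rfl).injective
  have hgmem : ∀ i, g i ∈ S := fun i => S.orderEmbOfFin_mem rfl i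
  have himg : Finset.univ.image g = S := by
    apply Finset.coe_injective
    rw [Finset.coe_image, Finset.coe_univ, Set.image_univ]
    exact S.range_orderEmbOfFin rfl
  obtain ⟨L, hL1, hL2⟩ := hM k hScard g hginj
  have hMnn : 0 ≤ M := le_trans (Real.sqrt_nonneg _) hL2
  -- column sums
  have hcolsum : ∀ j, ∑ i, (A i j)^2 = 1 := by
    intro j
    have := hcols j
    unfold vnorm at this
    nlinarith [Real.sq_sqrt (by positivity : (0:ℝ) ≤ ∑ i, (A i j)^2), this]
  -- key identity
  set C : Fin k → Fin m → ℝ := fun i j => ∑ p, L i p * A p j with hC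
  have key : ∀ i, s (g i) = -∑ j ∈ T, C i j * s j := by
    intro i
    have h0 : ∑ j, C i j * s j = 0 := by
      have hz : L.mulVec (A.mulVec s) i = 0 := by rw [hs]; simp [mulVec]
      rw [← hz]
      simp only [mulVec, dotProduct, Finset.mul_sum]
      rw [Finset.sum_comm]
      simp [hC, Finset.sum_mul, mul_assoc]
    have hsplit : (∑ j ∈ S, C i j * s j) + (∑ j ∈ T, C i j * s j) = 0 := by
      rw [← h0]
      have : Sᶜ = T := by rw [hSdef, compl_compl]
      rw [← this, Finset.sum_add_sum_compl]
    have hSsum : ∑ j ∈ S, C i j * s j = s (g i) := by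
      rw [← himg, Finset.sum_image (fun a _ b _ h => hginj h)]
      have : ∀ q, C i (g q) = (1 : Matrix (Fin k) (Fin k) ℝ) i q := by
        intro q
        rw [← hL1]
        simp [hC, Matrix.mul_apply, Matrix.submatrix_apply]
      simp only [this]
      simp [Matrix.one_apply]
    rw [hSsum] at hsplit
    linarith
  -- bound on S part via Euclidean norm
  set v : Fin k → ℝ := fun i => s (g i) with hv
  have hvb : vnorm v ≤ M * (T.card * α) := by
    set e : (Fin k → ℝ) ≃ₗ[ℝ] EuclideanSpace ℝ (Fin k) :=
      (WithLp.linearEquiv 2 ℝ (Fin k → ℝ)).symm with he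
    have hvn : ∀ x : Fin k → ℝ, vnorm x = ‖e x‖ := fun x => vnorm_eq_norm x
    have hveq : e v = -∑ j ∈ T, s j • e (fun i => C i j) := by
      have step1 : e v = e (-∑ j ∈ T, s j • (fun i => C i j)) := by
        congr 1
        funext i
        simp only [Pi.neg_apply, Finset.sum_apply, Pi.smul_apply, smul_eq_mul]
        rw [hv]
        simp only [key i]
        congr 1
        exact Finset.sum_congr rfl (fun j _ => mul_comm _ _)
      rw [step1, map_neg, map_sum]
      simp only [_root_.map_smul]
    rw [hvn, hveq, norm_neg]
    calc ‖∑ j ∈ T, s j • e (fun i => C i j)‖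
        ≤ ∑ j ∈ T, ‖s j • e (fun i => C i j)‖ :=
          norm_sum_le _ _
      _ ≤ ∑ j ∈ T, α * M := by
          apply Finset.sum_le_sum
          intro j hj
          rw [norm_smul, Real.norm_eq_abs]
          have hja : |s j| < α := by
            rw [hTdef, Finset.mem_filter] at hj; exact hj.2
          have hcb : ‖e (fun i => C i j)‖ ≤ M := by
            rw [← hvn]
            have : (fun i => C i j) = L.mulVec (fun p => A p j) := by
              funext i; simp [hC, mulVec, dotProduct]
            rw [this]
            exact le_trans (colbound L _ (hcolsum j)) hL2
          exact mul_le_mul hja.le hcb (norm_nonneg _) hαpos.le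
      _ = T.card * α * M := by rw [Finset.sum_const, nsmul_eq_mul]; ring
      _ = M * (T.card * α) := by ring
  -- bound on T part
  have hTb : Real.sqrt (∑ j ∈ T, (s j)^2) ≤ m * α := by
    have h1 : ∑ j ∈ T, (s j)^2 ≤ T.card * α^2 := by
      rw [← nsmul_eq_mul]
      apply Finset.sum_le_card_nsmul
      intro j hj
      have hja : |s j| < α := by rw [hTdef, Finset.mem_filter] at hj; exact hj.2
      nlinarith [abs_nonneg (s j), sq_abs (s j)]
    have h2 : (T.card : ℝ) * α^2 ≤ (m*α)^2 := by
      have hTm : (T.card : ℝ) ≤ m := by exact_mod_cast (by omega : T.card ≤ m)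
      have hm1 : (1:ℝ) ≤ m := by exact_mod_cast (by omega : 1 ≤ m)
      have hmm : (T.card:ℝ) ≤ (m:ℝ)^2 := le_trans hTm (by nlinarith)
      calc (T.card:ℝ)*α^2 ≤ (m:ℝ)^2 * α^2 := mul_le_mul_of_nonneg_right hmm (sq_nonneg α)
        _ = (m*α)^2 := by ring
    calc Real.sqrt (∑ j ∈ T, (s j)^2) ≤ Real.sqrt ((m*α)^2) :=
          Real.sqrt_le_sqrt (le_trans h1 h2)
      _ = m * α := Real.sqrt_sq (by positivity)
  -- combine
  have hsplit2 : ∑ j, (s j)^2 = (∑ j ∈ S, (s j)^2) + ∑ j ∈ T, (s j)^2 := by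
    have : Sᶜ = T := by rw [hSdef, compl_compl]
    rw [← this, Finset.sum_add_sum_compl]
  have hSeq : Real.sqrt (∑ j ∈ S, (s j)^2) = vnorm v := by
    unfold vnorm
    congr 1
    rw [← himg, Finset.sum_image (fun a _ b _ h => hginj h)]
  have hTcm : (T.card : ℝ) * α ≤ m * α := by
    have : (T.card : ℝ) ≤ m := by exact_mod_cast (by omega : T.card ≤ m)
    nlinarith
  calc vnorm s = Real.sqrt ((∑ j ∈ S, (s j)^2) + ∑ j ∈ T, (s j)^2) := by
        unfold vnorm; rw [hsplit2]
    _ ≤ Real.sqrt (∑ j ∈ S, (s j)^2) + Real.sqrt (∑ j ∈ T, (s j)^2) :=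
        sqrt_add_le _ _ (by positivity) (by positivity)
    _ ≤ M * (T.card * α) + m * α := by
        rw [hSeq]; exact add_le_add hvb hTb
    _ ≤ M * (m * α) + m * α := by
        apply add_le_add_left
        exact mul_le_mul_of_nonneg_left hTcm hMnn
    _ = (M + 1) * m * α := by ring
end

section
/- If A is an n×m matrix with unit-norm columns satisfying the URP, and s ∈ null(A) has at most n elements with absolute value greater than α, then ‖s‖ < (M+1)·m·α, where M is the maximum norm of left inverses of submatrices of A with at most n columns. -/
open Matrix Finset Filter

noncomputable def toE {k : ℕ} : (Fin k → ℝ) ≃ₗ[ℝ] EuclideanSpace ℝ (Fin k) :=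
  (WithLp.linearEquiv 2 ℝ (Fin k → ℝ)).symm

lemma toE_apply {k : ℕ} (s : Fin k → ℝ) (i : Fin k) : toE s i = s i := rfl

lemma vnorm_eq_norm_s1 {k : ℕ} (s : Fin k → ℝ) : vnorm s = ‖toE s‖ := by
  rw [EuclideanSpace.norm_eq]
  simp [vnorm, toE_apply, sq_abs]

lemma vnorm_add_le {k : ℕ} (a b : Fin k → ℝ) : vnorm (a + b) ≤ vnorm a + vnorm b := by
  simp only [vnorm_eq_norm_s1, map_add]
  exact norm_add_le _ _

lemma vnorm_neg {k : ℕ} (a : Fin k → ℝ) : vnorm (-a) = vnorm a := by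
  simp [vnorm]

lemma vnorm_nonneg {k : ℕ} (s : Fin k → ℝ) : 0 ≤ vnorm s := Real.sqrt_nonneg _

lemma vnorm_mulVec_le {p q : ℕ} (L : Matrix (Fin p) (Fin q) ℝ) (x : Fin q → ℝ) :
    vnorm (L.mulVec x) ≤ mnorm L * vnorm x := by
  unfold vnorm mnorm
  rw [← Real.sqrt_mul (by positivity)]
  apply Real.sqrt_le_sqrt
  rw [Finset.sum_mul]
  apply Finset.sum_le_sum
  intro i _
  calc (L.mulVec x i)^2 = (∑ j, L i j * x j)^2 := by
        simp [Matrix.mulVec, dotProduct]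
    _ ≤ (∑ j, (L i j)^2) * (∑ j, (x j)^2) := Finset.sum_mul_sq_le_sq_mul_sq _ _ _

lemma vnorm_colsum_le {n m : ℕ} (A : Matrix (Fin n) (Fin m) ℝ) (hcols : UnitCols A)
    (y : Fin m → ℝ) : vnorm (A.mulVec y) ≤ ∑ j, |y j| := by
  have h1 : A.mulVec y = ∑ j, y j • (fun i => A i j) := by
    funext i
    simp [Matrix.mulVec, dotProduct, Finset.sum_apply, mul_comm]
  rw [vnorm_eq_norm_s1, h1, map_sum]
  simp_rw [_root_.map_smul]
  calc ‖∑ j, y j • toE (fun i => A i j)‖ ≤ ∑ j, ‖y j • toE (fun i => A i j)‖ :=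
        norm_sum_le _ _
    _ = ∑ j, |y j| := by
        simp only [norm_smul, ← vnorm_eq_norm_s1, Real.norm_eq_abs]
        exact Finset.sum_congr rfl fun j _ => by rw [hcols, mul_one]

theorem stmt1 {n m : ℕ} (hnm : n < m) (A : Matrix (Fin n) (Fin m) ℝ)
    (hcols : UnitCols A) (hURP : URP A) (M : ℝ) (hM : LeftInvBound A M)
    (s : Fin m → ℝ) (hs : A.mulVec s = 0) (α : ℝ) (hα : 0 < α)
    (hcard : (Finset.univ.filter fun i => α < |s i|).card ≤ n) :
    vnorm s < (M + 1) * m * α := by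
  -- n ≥ 1
  have hn : 0 < n := by
    rcases Nat.eq_zero_or_pos n with h | h
    · exfalso
      subst h
      have := hcols ⟨0, hnm⟩
      simp [vnorm] at this
    · exact h
  have hm2 : 2 ≤ m := by omega
  have hm2' : (2 : ℝ) ≤ (m : ℝ) := by exact_mod_cast hm2
  -- M ≥ 0
  have hM0 : 0 ≤ M := by
    obtain ⟨L, -, hL⟩ := hM 0 (Nat.zero_le n) Fin.elim0 (fun i => i.elim0)
    exact le_trans (Real.sqrt_nonneg _) hL
  set T : Finset (Fin m) := Finset.univ.filter fun i => α < |s i| with hT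
  set g : Fin T.card → Fin m := ⇑(T.orderEmbOfFin rfl) with hg
  have hginj : Function.Injective g := (T.orderEmbOfFin rfl).injective
  have hbij : ∀ f : Fin m → ℝ, ∑ i, f (g i) = ∑ j ∈ T, f j := by
    intro f
    rw [← Finset.sum_coe_sort T f]
    exact Fintype.sum_equiv (T.orderIsoOfFin rfl).toEquiv _ _ (fun i => rfl)
  obtain ⟨L, hL1, hL2⟩ := hM T.card hcard g hginj
  set y : Fin m → ℝ := fun j => if j ∈ T then 0 else s j with hy
  set t : Fin m → ℝ := fun j => if j ∈ T then s j else 0 with ht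
  have hst : s = t + y := by
    funext j
    by_cases h : j ∈ T <;> simp [ht, hy, h]
  have hkey : A.mulVec t = (A.submatrix id g).mulVec (fun i => s (g i)) := by
    funext r
    simp only [Matrix.mulVec, dotProduct, Matrix.submatrix_apply, id_eq]
    rw [hbij (fun j => A r j * s j)]
    simp only [ht, mul_ite, mul_zero]
    rw [Finset.sum_ite_mem, Finset.univ_inter]
  have h2 : A.mulVec t + A.mulVec y = 0 := by
    rw [← Matrix.mulVec_add, ← hst, hs]
  have hsum : (A.submatrix id g).mulVec (fun i => s (g i)) = -(A.mulVec y) := by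
    rw [← hkey]
    exact eq_neg_of_add_eq_zero_left h2
  have hxeq : (fun i => s (g i)) = L.mulVec ((A.submatrix id g).mulVec (fun i => s (g i))) := by
    rw [Matrix.mulVec_mulVec, hL1, Matrix.one_mulVec]
  -- bound on |y j|
  have hyα : ∀ j, |y j| ≤ α := by
    intro j
    by_cases h : j ∈ T
    · simp [hy, h, hα.le]
    · have : ¬ (α < |s j|) := by
        intro hc
        exact h (by simp [hT, hc])
      simp only [hy, if_neg h]
      linarith
  have hvy_sum : vnorm (A.mulVec y) ≤ (m : ℝ) * α := by
    refine le_trans (vnorm_colsum_le A hcols y) ?_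
    calc ∑ j, |y j| ≤ ∑ _j : Fin m, α := Finset.sum_le_sum (fun j _ => hyα j)
      _ = (m : ℝ) * α := by simp [mul_comm]
  -- bound vnorm of the big part
  have hvx : vnorm (fun i => s (g i)) ≤ M * ((m : ℝ) * α) := by
    rw [hxeq, hsum, Matrix.mulVec_neg, vnorm_neg]
    calc vnorm (L.mulVec (A.mulVec y)) ≤ mnorm L * vnorm (A.mulVec y) :=
          vnorm_mulVec_le L _
      _ ≤ M * ((m : ℝ) * α) :=
          mul_le_mul hL2 hvy_sum (vnorm_nonneg _) hM0
  have hvt : vnorm t = vnorm (fun i => s (g i)) := by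
    show Real.sqrt (∑ j, (t j)^2) = Real.sqrt (∑ i, (s (g i))^2)
    congr 1
    rw [hbij (fun j => (s j)^2)]
    simp only [ht, apply_ite (· ^ 2), ne_eq, OfNat.ofNat_ne_zero, not_false_eq_true,
      zero_pow]
    rw [Finset.sum_ite_mem, Finset.univ_inter]
  have hvyn : vnorm y ≤ Real.sqrt m * α := by
    have h1 : ∑ j, (y j)^2 ≤ (m : ℝ) * α^2 := by
      calc ∑ j, (y j)^2 ≤ ∑ _j : Fin m, α^2 := by
            refine Finset.sum_le_sum (fun j _ => ?_)
            rw [← sq_abs]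
            exact pow_le_pow_left₀ (abs_nonneg _) (hyα j) 2
        _ = (m : ℝ) * α^2 := by simp [mul_comm]
    calc vnorm y ≤ Real.sqrt ((m : ℝ) * α^2) := Real.sqrt_le_sqrt h1
      _ = Real.sqrt m * α := by
          rw [Real.sqrt_mul (by positivity), Real.sqrt_sq hα.le]
  have hsqrt : Real.sqrt m < (m : ℝ) := by
    rw [show Real.sqrt (m : ℝ) < (m : ℝ) ↔ (m : ℝ) < (m : ℝ)^2 from
      Real.sqrt_lt' (by linarith)]
    nlinarith
  have htri : vnorm s ≤ vnorm t + vnorm y := hst ▸ vnorm_add_le t y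
  have : vnorm s ≤ M * ((m : ℝ) * α) + Real.sqrt m * α := by
    rw [hvt] at htri
    linarith
  nlinarith [mul_lt_mul_of_pos_right hsqrt hα, mul_nonneg hM0 (mul_nonneg (Nat.cast_nonneg m : (0:ℝ) ≤ m) hα.le)]
end

section
/- Let f_σ (σ > 0) be a family of functions ℝ → ℝ satisfying: (1) lim_{σ→0} f_σ(s) = 0 for all s ≠ 0; (2) f_σ(0) = 1; (3) 0 ≤ f_σ(s) ≤ 1; (4) for all ν, α > 0 there exists σ₀ > 0 such that |s| > α implies f_σ(s) < ν for all σ < σ₀. Let A be n×m with unit-norm columns satisfying URP, F_σ(s) = Σᵢ f_σ(sᵢ), and s⁰ the (unique) solution of As = x with ‖s⁰‖₀ ≤ n/2. If s^σ maximizes F_σ subject to As = x, then s^σ → s⁰ as σ → 0. -/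
open Matrix Finset Filter

lemma exists_ext {n m : ℕ} (hnm : n ≤ m) (S : Finset (Fin m)) (hS : S.card ≤ n) :
    ∃ g : Fin n → Fin m, Function.Injective g ∧ ∀ j ∈ S, ∃ t, g t = j := by
  obtain ⟨T, hST, hT⟩ := Finset.exists_superset_card_eq hS (by simpa using hnm)
  refine ⟨fun i => (T.orderIsoOfFin hT i : Fin m), ?_, ?_⟩
  · intro a b hab
    exact (T.orderIsoOfFin hT).injective (Subtype.ext hab)
  · intro j hj
    obtain ⟨t, ht⟩ := (T.orderIsoOfFin hT).surjective ⟨j, hST hj⟩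
    exact ⟨t, by simp [ht]⟩

lemma indep_lemma {n m : ℕ} (hnm : n ≤ m) (A : Matrix (Fin n) (Fin m) ℝ) (hURP : URP A)
    (S : Finset (Fin m)) (hS : S.card ≤ n) (d : Fin m → ℝ)
    (hd : A.mulVec d = 0) (hz : ∀ i ∉ S, d i = 0) : d = 0 := by
  obtain ⟨g, hginj, hgS⟩ := exists_ext hnm S hS
  have hz' : ∀ j : Fin m, (∀ t, g t ≠ j) → d j = 0 := by
    intro j hj
    by_cases hjS : j ∈ S
    · obtain ⟨t, ht⟩ := hgS j hjS; exact absurd ht (hj t)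
    · exact hz j hjS
  have key : (A.submatrix id g).mulVec (fun t => d (g t)) = 0 := by
    funext i
    have : (A.submatrix id g).mulVec (fun t => d (g t)) i = A.mulVec d i := by
      simp only [Matrix.mulVec, dotProduct, Matrix.submatrix_apply, id]
      rw [show ∑ t : Fin n, A i (g t) * d (g t)
            = ∑ j ∈ Finset.univ.image g, A i j * d j from
          (Finset.sum_image (f := fun j => A i j * d j)
            (fun a _ b _ h => hginj h)).symm]
      refine Finset.sum_subset (Finset.subset_univ _) ?_
      intro j _ hj
      have : d j = 0 := by
        refine hz' j fun t ht => hj ?_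
        rw [← ht]; exact Finset.mem_image_of_mem g (Finset.mem_univ t)
      simp [this]
    rw [this, hd]
  have hdet := hURP g hginj
  have hu : IsUnit (A.submatrix id g).det := isUnit_iff_ne_zero.mpr hdet
  have : (fun t => d (g t)) = 0 := by
    have h1 := congrArg ((A.submatrix id g)⁻¹.mulVec ·) key
    simpa [Matrix.mulVec_mulVec, Matrix.nonsing_inv_mul _ hu] using h1
  funext j
  by_cases hj : ∃ t, g t = j
  · obtain ⟨t, ht⟩ := hj
    rw [← ht]
    exact congrFun this t
  · exact hz' j (fun t ht => hj ⟨t, ht⟩)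

lemma bound_one {n m : ℕ} (hnm : n ≤ m) (A : Matrix (Fin n) (Fin m) ℝ) (hURP : URP A)
    (S : Finset (Fin m)) (hS : S.card ≤ n) :
    ∃ C : ℝ, 0 ≤ C ∧ ∀ d : Fin m → ℝ, A.mulVec d = 0 →
      ∀ α : ℝ, 0 ≤ α → (∀ i ∉ S, |d i| ≤ α) → ‖d‖ ≤ C * α := by
  classical
  set W : Submodule ℝ (Fin m → ℝ) := LinearMap.ker (Matrix.mulVecLin A) with hW
  let π : (Fin m → ℝ) →ₗ[ℝ] (Fin m → ℝ) :=
    { toFun := fun d i => if i ∈ S then 0 else d i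
      map_add' := by intro a b; funext i; by_cases h : i ∈ S <;> simp [h]
      map_smul' := by intro c a; funext i; by_cases h : i ∈ S <;> simp [h] }
  let φ : W →ₗ[ℝ] (Fin m → ℝ) := π.comp W.subtype
  have hφinj : Function.Injective φ := by
    rw [← LinearMap.ker_eq_bot]
    rw [LinearMap.ker_eq_bot']
    intro w hw
    have hz : ∀ i ∉ S, (w : Fin m → ℝ) i = 0 := by
      intro i hi
      have := congrFun hw i
      simpa [φ, π, hi] using this
    have hker : A.mulVec (w : Fin m → ℝ) = 0 := w.2
    have := indep_lemma hnm A hURP S hS _ hker hz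
    exact Subtype.ext this
  let e : W ≃ₗ[ℝ] LinearMap.range φ := LinearEquiv.ofInjective φ hφinj
  let eC := e.toContinuousLinearEquiv
  refine ⟨‖(eC.symm : LinearMap.range φ →L[ℝ] W)‖,
    ContinuousLinearMap.opNorm_nonneg _, ?_⟩
  intro d hd α hα hbd
  have hdW : d ∈ W := hd
  set w : W := ⟨d, hdW⟩ with hw
  have h1 : ‖w‖ ≤ ‖(eC.symm : LinearMap.range φ →L[ℝ] W)‖ * ‖eC w‖ := by
    calc ‖w‖ = ‖eC.symm (eC w)‖ := by rw [eC.symm_apply_apply]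
    _ ≤ _ := (eC.symm : LinearMap.range φ →L[ℝ] W).le_opNorm _
  have h2 : ‖eC w‖ = ‖φ w‖ := by
    have : ((eC w : LinearMap.range φ) : Fin m → ℝ) = φ w := by
      have h0 : eC w = e w := congrFun e.coe_toContinuousLinearEquiv' w
      rw [h0]
      exact LinearEquiv.ofInjective_apply φ (h := hφinj) w
    rw [show ‖eC w‖ = ‖((eC w : LinearMap.range φ) : Fin m → ℝ)‖ from rfl, this]
  have h3 : ‖φ w‖ ≤ α := by
    refine (pi_norm_le_iff_of_nonneg hα).mpr fun i => ?_
    by_cases hi : i ∈ S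
    · simp [φ, π, hi, hα]
    · simpa [φ, π, hi] using hbd i hi
  have hwn : ‖w‖ = ‖d‖ := rfl
  calc ‖d‖ = ‖w‖ := hwn.symm
  _ ≤ ‖(eC.symm : LinearMap.range φ →L[ℝ] W)‖ * ‖eC w‖ := h1
  _ = ‖(eC.symm : LinearMap.range φ →L[ℝ] W)‖ * ‖φ w‖ := by rw [h2]
  _ ≤ _ := by
      have := ContinuousLinearMap.opNorm_nonneg
        (eC.symm : LinearMap.range φ →L[ℝ] W)
      nlinarith [h3]

lemma bound_all {n m : ℕ} (hnm : n ≤ m) (A : Matrix (Fin n) (Fin m) ℝ) (hURP : URP A) :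
    ∃ M : ℝ, 0 ≤ M ∧ ∀ S : Finset (Fin m), S.card ≤ n → ∀ d : Fin m → ℝ,
      A.mulVec d = 0 → ∀ α : ℝ, 0 ≤ α → (∀ i ∉ S, |d i| ≤ α) → ‖d‖ ≤ M * α := by
  classical
  have h : ∀ S : Finset (Fin m), ∃ C : ℝ, 0 ≤ C ∧ (S.card ≤ n →
      ∀ d : Fin m → ℝ, A.mulVec d = 0 →
        ∀ α : ℝ, 0 ≤ α → (∀ i ∉ S, |d i| ≤ α) → ‖d‖ ≤ C * α) := by
    intro S
    by_cases hS : S.card ≤ n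
    · obtain ⟨C, hC0, hC⟩ := bound_one hnm A hURP S hS
      exact ⟨C, hC0, fun _ => hC⟩
    · exact ⟨0, le_refl 0, fun h => absurd h hS⟩
  choose C hC0 hC using h
  refine ⟨∑ S : Finset (Fin m), C S, Finset.sum_nonneg fun S _ => hC0 S, ?_⟩
  intro S hS d hd α hα hbd
  calc ‖d‖ ≤ C S * α := hC S hS d hd α hα hbd
  _ ≤ (∑ S : Finset (Fin m), C S) * α :=
      mul_le_mul_of_nonneg_right
        (Finset.single_le_sum (fun i _ => hC0 i) (Finset.mem_univ S)) hα


set_option maxHeartbeats 1600000 in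
theorem stmt6 {n m : ℕ} (hnm : n < m) (A : Matrix (Fin n) (Fin m) ℝ)
    (hcols : UnitCols A) (hURP : URP A)
    (f : ℝ → ℝ → ℝ)
    (hf1 : ∀ s : ℝ, s ≠ 0 →
      Tendsto (fun σ => f σ s) (nhdsWithin 0 (Set.Ioi 0)) (nhds 0))
    (hf2 : ∀ σ : ℝ, 0 < σ → f σ 0 = 1)
    (hf3 : ∀ σ : ℝ, 0 < σ → ∀ s : ℝ, 0 ≤ f σ s ∧ f σ s ≤ 1)
    (hf4 : ∀ ν : ℝ, 0 < ν → ∀ α : ℝ, 0 < α → ∃ σ0 : ℝ, 0 < σ0 ∧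
      ∀ σ : ℝ, 0 < σ → σ < σ0 → ∀ s : ℝ, α < |s| → f σ s < ν)
    (x : Fin n → ℝ) (s0 : Fin m → ℝ) (hs0 : A.mulVec s0 = x)
    (hs0k : 2 * (Finset.univ.filter fun i => s0 i ≠ 0).card ≤ n)
    (sσ : ℝ → (Fin m → ℝ))
    (hsσ : ∀ σ : ℝ, 0 < σ → A.mulVec (sσ σ) = x ∧
      ∀ s : Fin m → ℝ, A.mulVec s = x → ∑ i, f σ (s i) ≤ ∑ i, f σ (sσ σ i)) :
    Tendsto (fun σ => vnorm (sσ σ - s0)) (nhdsWithin 0 (Set.Ioi 0)) (nhds 0) := by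
  classical
  obtain ⟨M, hM0, hM⟩ := bound_all (le_of_lt hnm) A hURP
  rw [Metric.tendsto_nhdsWithin_nhds]
  intro ε hε
  set I : Finset (Fin m) := Finset.univ.filter fun i => s0 i ≠ 0 with hI
  set k : ℕ := I.card with hk
  set c : ℝ := Real.sqrt m * M with hc
  have hc0 : 0 ≤ c := mul_nonneg (Real.sqrt_nonneg _) hM0
  set α : ℝ := ε / (2 * (c + 1)) with hαdef
  have hα : 0 < α := div_pos hε (by linarith)
  set ν : ℝ := 1 / ((k : ℝ) + 2) with hνdef
  have hν : 0 < ν := by positivity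
  obtain ⟨σ0, hσ0pos, hσ0⟩ := hf4 ν hν α hα
  refine ⟨σ0, hσ0pos, ?_⟩
  intro σ hσIoi hdist
  have hσpos : 0 < σ := hσIoi
  have hσlt : σ < σ0 := by
    rwa [Real.dist_eq, sub_zero, abs_of_pos hσpos] at hdist
  obtain ⟨hAs, hmax⟩ := hsσ σ hσpos
  set B : Finset (Fin m) := Finset.univ.filter fun i => α < |sσ σ i| with hB
  set b : ℕ := B.card with hb
  have hkm : k ≤ m := by
    calc k ≤ Finset.univ.card := Finset.card_le_card (Finset.filter_subset _ _)
    _ = m := Finset.card_univ.trans (Fintype.card_fin m)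
  have hbm : b ≤ m := by
    calc b ≤ Finset.univ.card := Finset.card_le_card (Finset.filter_subset _ _)
    _ = m := Finset.card_univ.trans (Fintype.card_fin m)
  -- lower bound on F_σ(s0)
  have hcardI : ((Finset.univ.filter fun i => ¬ s0 i ≠ 0).card : ℝ) = m - k := by
    have := Finset.card_filter_add_card_filter_not
      (s := (Finset.univ : Finset (Fin m))) (p := fun i => s0 i ≠ 0)
    have h2 : I.card + (Finset.univ.filter fun i => ¬ s0 i ≠ 0).card = m := by
      simpa [hI] using this
    have := congrArg (fun t : ℕ => (t : ℝ)) h2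
    push_cast at this
    linarith
  have hlow : (m : ℝ) - k ≤ ∑ i, f σ (s0 i) := by
    rw [← Finset.sum_filter_add_sum_filter_not Finset.univ (fun i => s0 i ≠ 0)]
    have h1 : 0 ≤ ∑ i ∈ Finset.univ.filter fun i => s0 i ≠ 0, f σ (s0 i) :=
      Finset.sum_nonneg fun i _ => (hf3 σ hσpos (s0 i)).1
    have h2 : ∑ i ∈ Finset.univ.filter (fun i => ¬ s0 i ≠ 0), f σ (s0 i)
        = (m : ℝ) - k := by
      rw [Finset.sum_congr rfl (fun i hi => ?_), Finset.sum_const, nsmul_eq_mul,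
        mul_one, hcardI]
      have : s0 i = 0 := by simpa using (Finset.mem_filter.mp hi).2
      rw [this]; exact hf2 σ hσpos
    linarith
  -- upper bound on F_σ(sσ)
  have hcardB : ((Finset.univ.filter fun i => ¬ α < |sσ σ i|).card : ℝ) = m - b := by
    have := Finset.card_filter_add_card_filter_not
      (s := (Finset.univ : Finset (Fin m))) (p := fun i => α < |sσ σ i|)
    have h2 : B.card + (Finset.univ.filter fun i => ¬ α < |sσ σ i|).card = m := by
      simpa [hB] using this
    have := congrArg (fun t : ℕ => (t : ℝ)) h2
    push_cast at this
    linarith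
  have hup : ∑ i, f σ (sσ σ i) ≤ (b : ℝ) * ν + ((m : ℝ) - b) := by
    rw [← Finset.sum_filter_add_sum_filter_not Finset.univ (fun i => α < |sσ σ i|)]
    have h1 : ∑ i ∈ B, f σ (sσ σ i) ≤ (b : ℝ) * ν := by
      calc ∑ i ∈ B, f σ (sσ σ i) ≤ ∑ _i ∈ B, ν :=
        Finset.sum_le_sum fun i hi =>
          le_of_lt (hσ0 σ hσpos hσlt _ (Finset.mem_filter.mp hi).2)
      _ = (b : ℝ) * ν := by rw [Finset.sum_const, nsmul_eq_mul]
    have h2 : ∑ i ∈ Finset.univ.filter (fun i => ¬ α < |sσ σ i|), f σ (sσ σ i)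
        ≤ (m : ℝ) - b := by
      calc ∑ i ∈ Finset.univ.filter (fun i => ¬ α < |sσ σ i|), f σ (sσ σ i)
          ≤ ∑ _i ∈ Finset.univ.filter (fun i => ¬ α < |sσ σ i|), (1 : ℝ) :=
        Finset.sum_le_sum fun i _ => (hf3 σ hσpos _).2
      _ = (m : ℝ) - b := by rw [Finset.sum_const, nsmul_eq_mul, mul_one, hcardB]
    linarith
  have hmid : ∑ i, f σ (s0 i) ≤ ∑ i, f σ (sσ σ i) := hmax s0 hs0
  -- b ≤ k
  have hbk : b ≤ k := by
    have hreal : (b : ℝ) * (1 - ν) ≤ k := by linarith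
    have hν2 : ν * ((k : ℝ) + 2) = 1 := by
      rw [hνdef]; field_simp
    have hblt : (b : ℝ) < (k : ℝ) + 1 := by
      nlinarith [Nat.cast_nonneg (α := ℝ) b, Nat.cast_nonneg (α := ℝ) k]
    have : b < k + 1 := by exact_mod_cast hblt
    omega
  -- main estimate
  set S : Finset (Fin m) := I ∪ B with hS
  have hScard : S.card ≤ n := by
    calc S.card ≤ I.card + B.card := Finset.card_union_le _ _
    _ = k + b := rfl
    _ ≤ k + k := by omega
    _ ≤ n := by omega
  set d : Fin m → ℝ := sσ σ - s0 with hd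
  have hAd : A.mulVec d = 0 := by
    rw [hd, Matrix.mulVec_sub, hAs, hs0, sub_self]
  have hsmall : ∀ i ∉ S, |d i| ≤ α := by
    intro i hi
    rw [Finset.mem_union] at hi
    push_neg at hi
    obtain ⟨hiI, hiB⟩ := hi
    have h1 : s0 i = 0 := by
      by_contra h
      exact hiI (Finset.mem_filter.mpr ⟨Finset.mem_univ i, h⟩)
    have h2 : ¬ α < |sσ σ i| := fun h =>
      hiB (Finset.mem_filter.mpr ⟨Finset.mem_univ i, h⟩)
    push_neg at h2
    have : d i = sσ σ i := by simp [hd, h1]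
    rw [this]
    exact h2
  have hnd : ‖d‖ ≤ M * α := hM S hScard d hAd α (le_of_lt hα) hsmall
  -- vnorm vs sup norm
  have hvn : vnorm d ≤ Real.sqrt m * ‖d‖ := by
    rw [vnorm]
    have h2 : ∀ i, (d i)^2 ≤ ‖d‖^2 := by
      intro i
      rw [← sq_abs (d i)]
      have h3 : |d i| ≤ ‖d‖ := by
        rw [← Real.norm_eq_abs]
        exact norm_le_pi_norm d i
      exact pow_le_pow_left₀ (abs_nonneg _) h3 2
    have h1 : ∑ i, (d i)^2 ≤ (m : ℝ) * ‖d‖^2 := by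
      calc ∑ i, (d i)^2 ≤ ∑ _i : Fin m, ‖d‖^2 := Finset.sum_le_sum fun i _ => h2 i
      _ = (m : ℝ) * ‖d‖^2 := by
        rw [Finset.sum_const, nsmul_eq_mul, Finset.card_univ, Fintype.card_fin]
    calc Real.sqrt (∑ i, (d i)^2) ≤ Real.sqrt ((m : ℝ) * ‖d‖^2) :=
      Real.sqrt_le_sqrt h1
    _ = Real.sqrt m * ‖d‖ := by
      rw [Real.sqrt_mul (Nat.cast_nonneg m), Real.sqrt_sq (norm_nonneg d)]
  have hfinal : vnorm d < ε := by
    have h1 : vnorm d ≤ c * α := by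
      calc vnorm d ≤ Real.sqrt m * ‖d‖ := hvn
      _ ≤ Real.sqrt m * (M * α) :=
        mul_le_mul_of_nonneg_left hnd (Real.sqrt_nonneg _)
      _ = c * α := by rw [hc]; ring
    have hne : (2 * (c + 1)) ≠ 0 := ne_of_gt (by linarith)
    have h2 : α * (2 * (c + 1)) = ε := by
      rw [hαdef]; exact div_mul_cancel₀ ε hne
    nlinarith
  have h0 : 0 ≤ vnorm d := by rw [vnorm]; exact Real.sqrt_nonneg _
  rw [Real.dist_eq, sub_zero, abs_of_nonneg h0]
  exact hfinal
end

section
/- If A is an n×m matrix satisfying the URP (every n×n submatrix invertible), then any two solutions of As = x each having at most n/2 nonzero entries are equal (uniqueness of the sparsest solution when sparsity is below n/2). -/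
open Matrix Finset Filter

theorem stmt19 {n m : ℕ} (hnm : n < m) (A : Matrix (Fin n) (Fin m) ℝ)
    (hURP : URP A) (x : Fin n → ℝ)
    (s1 s2 : Fin m → ℝ) (h1 : A.mulVec s1 = x) (h2 : A.mulVec s2 = x)
    (h1k : 2 * (Finset.univ.filter fun i => s1 i ≠ 0).card ≤ n)
    (h2k : 2 * (Finset.univ.filter fun i => s2 i ≠ 0).card ≤ n) :
    s1 = s2 := by
  set d : Fin m → ℝ := s1 - s2 with hd
  have hAd : A.mulVec d = 0 := by
    rw [hd, Matrix.mulVec_sub, h1, h2, sub_self]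
  have hsub : (Finset.univ.filter fun i => d i ≠ 0) ⊆
      (Finset.univ.filter fun i => s1 i ≠ 0) ∪ (Finset.univ.filter fun i => s2 i ≠ 0) := by
    intro i hi
    simp only [Finset.mem_filter, Finset.mem_union, Finset.mem_univ, true_and] at hi ⊢
    by_contra h
    push_neg at h
    exact hi (by simp [hd, h.1, h.2])
  have hcard : (Finset.univ.filter fun i => d i ≠ 0).card ≤ n := by
    have := Finset.card_le_card hsub
    have := Finset.card_union_le (Finset.univ.filter fun i => s1 i ≠ 0)
      (Finset.univ.filter fun i => s2 i ≠ 0)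
    omega
  obtain ⟨T, hST, hTcard⟩ := Finset.exists_superset_card_eq hcard
    (by simpa using hnm.le)
  set g : Fin n → Fin m := fun i => T.orderIsoOfFin hTcard i with hg
  have hginj : Function.Injective g := fun a b hab => by
    exact (T.orderIsoOfFin hTcard).injective (Subtype.ext hab)
  have hdet := hURP g hginj
  have hzero : ∀ j, j ∉ T → d j = 0 := by
    intro j hj
    by_contra h
    exact hj (hST (by simp [h]))
  have hB : (A.submatrix id g).mulVec (d ∘ g) = 0 := by
    funext i
    have key : (A.submatrix id g).mulVec (d ∘ g) i = ∑ j ∈ T, A i j * d j := by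
      calc (A.submatrix id g).mulVec (d ∘ g) i
          = ∑ k : Fin n, (fun j : T => A i (j : Fin m) * d j) ((T.orderIsoOfFin hTcard).toEquiv k) := rfl
        _ = ∑ j : T, A i (j : Fin m) * d j := Equiv.sum_comp _ (fun j : T => A i (j : Fin m) * d j)
        _ = ∑ j ∈ T, A i j * d j := by
              rw [Finset.univ_eq_attach]
              exact Finset.sum_attach T (fun j => A i j * d j)
    rw [key]
    have h2 : ∑ j ∈ T, A i j * d j = ∑ j, A i j * d j := by
      apply Finset.sum_subset (Finset.subset_univ T)
      intro j _ hj
      rw [hzero j hj, mul_zero]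
    rw [h2]
    have := congrFun hAd i
    simpa [Matrix.mulVec, dotProduct] using this
  have hdg : d ∘ g = 0 := by
    exact Matrix.eq_zero_of_mulVec_eq_zero hdet hB
  have hdzero : d = 0 := by
    funext j
    by_cases hj : j ∈ T
    · have hmem : j ∈ Set.range (T.orderEmbOfFin hTcard) := by
        rw [Finset.range_orderEmbOfFin]; exact hj
      obtain ⟨k, hk⟩ := hmem
      have hgk : g k = j := by
        rw [hg]; simp only [Finset.coe_orderIsoOfFin_apply]; exact hk
      rw [← hgk]
      exact congrFun hdg k
    · exact hzero j hj
  have := sub_eq_zero.mp hdzero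
  exact this
end
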